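/- Let K be a field with at least n elements, L a field extension of K, and (A_i), (B_i) two families of n×n matrices over K indexed by the same set I. If there exists P in GL_n(L) with P A_i P^{-1} = B_i for all i, then there exists Q in GL_n(K) with Q A_i Q^{-1} = B_i for all i. -/

import Mathlib

open MvPolynomial in
/-- det of a matrix of degree-1 homogeneous polynomials is homogeneous of degree n. -/
lemma aux_det_isHomogeneous {σ R : Type*} [CommRing R] {m : ℕ}
    (M : Matrix (Fin m) (Fin m) (MvPolynomial σ R))
    (hM : ∀ k l, (M k l).IsHomogeneous 1) : M.det.IsHomogeneous m := by
  rw [Matrix.det_apply]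
  apply MvPolynomial.IsHomogeneous.sum
  intro p _
  have hp : (∏ i, M (p i) i).IsHomogeneous m := by
    have := MvPolynomial.IsHomogeneous.prod Finset.univ (fun i => M (p i) i) (fun _ => 1)
      (fun i _ => hM _ _)
    simpa using this
  obtain h1 | h1 := Int.units_eq_one_or (Equiv.Perm.sign p)
  · rw [h1, one_smul]; exact hp
  · rw [h1, Units.smul_def, Units.val_neg, Units.val_one, neg_smul, one_smul]
    exact (MvPolynomial.mem_homogeneousSubmodule _ _).1
      (Submodule.neg_mem _ ((MvPolynomial.mem_homogeneousSubmodule _ _).2 hp))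

/-- If `K` has at least `n` elements and two families of `n × n` matrices over `K`
are simultaneously similar over a field extension `L`, then they are simultaneously
similar over `K`. -/
theorem stmt_0 {K L : Type*} [Field K] [Field L] [Algebra K L] {n : ℕ}
    (hK : (n : Cardinal) ≤ Cardinal.mk K) {I : Type*}
    (A B : I → Matrix (Fin n) (Fin n) K)
    (P : (Matrix (Fin n) (Fin n) L)ˣ)
    (h : ∀ i, (P : Matrix (Fin n) (Fin n) L) * (A i).map (algebraMap K L) * (P⁻¹ : Matrix (Fin n) (Fin n) L) =
      (B i).map (algebraMap K L)) :
    ∃ Q : (Matrix (Fin n) (Fin n) K)ˣ,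
      ∀ i, (Q : Matrix (Fin n) (Fin n) K) * A i * (Q⁻¹ : Matrix (Fin n) (Fin n) K) = B i := by
  classical
  set φ := algebraMap K L with hφ
  set ι := Module.Basis.ofVectorSpaceIndex K L
  set 𝔅 : Module.Basis ι K L := Module.Basis.ofVectorSpace K L with h𝔅
  -- the coordinate functionals
  set r : ι → L →ₗ[K] K := fun b => (Finsupp.lapply b) ∘ₗ (𝔅.repr : L →ₗ[K] (ι →₀ K)) with hr
  have hr_smul : ∀ (b : ι) (c : K) (x : L), r b (x * φ c) = r b x * c := by
    intro b c x
    have : x * φ c = c • x := by rw [Algebra.smul_def, mul_comm]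
    rw [this, map_smul, smul_eq_mul, mul_comm]
  -- components of P
  set Pc : ι → Matrix (Fin n) (Fin n) K :=
    fun b => Matrix.of fun k l => r b ((P : Matrix (Fin n) (Fin n) L) k l) with hPc
  have hdetP : (P : Matrix (Fin n) (Fin n) L).det ≠ 0 := by
    have h5 : (P : Matrix (Fin n) (Fin n) L).det
        * ((P⁻¹ : (Matrix (Fin n) (Fin n) L)ˣ) : Matrix (Fin n) (Fin n) L).det = 1 := by
      rw [← Matrix.det_mul, Units.mul_inv, Matrix.det_one]
    exact left_ne_zero_of_mul_eq_one h5
  have hPA : ∀ i, (P : Matrix (Fin n) (Fin n) L) * (A i).map φ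
      = (B i).map φ * (P : Matrix (Fin n) (Fin n) L) := by
    intro i
    conv_rhs => rw [← h i]
    rw [mul_assoc ((P : Matrix (Fin n) (Fin n) L) * (A i).map φ),
      Matrix.nonsing_inv_mul _ (isUnit_iff_ne_zero.mpr hdetP), mul_one]
  -- each component intertwines
  have hcomp : ∀ (b : ι) (i : I), Pc b * A i = B i * Pc b := by
    intro b i
    ext k l
    have h1 : (Pc b * A i) k l
        = r b (((P : Matrix (Fin n) (Fin n) L) * (A i).map φ) k l) := by
      simp only [Matrix.mul_apply, Matrix.map_apply, hPc, Matrix.of_apply]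
      rw [map_sum]
      exact Finset.sum_congr rfl fun j _ => (hr_smul b _ _).symm
    have h2 : (B i * Pc b) k l
        = r b (((B i).map φ * (P : Matrix (Fin n) (Fin n) L)) k l) := by
      simp only [Matrix.mul_apply, Matrix.map_apply, hPc, Matrix.of_apply]
      rw [map_sum]
      refine Finset.sum_congr rfl fun j _ => ?_
      have : φ (B i k j) * (P : Matrix (Fin n) (Fin n) L) j l
          = (P : Matrix (Fin n) (Fin n) L) j l * φ (B i k j) := mul_comm _ _
      rw [this, hr_smul, mul_comm]
    rw [h1, h2, hPA i]
  -- the finite support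
  set S : Finset ι := Finset.univ.biUnion
    (fun kl : Fin n × Fin n => (𝔅.repr ((P : Matrix (Fin n) (Fin n) L) kl.1 kl.2)).support)
    with hSdef
  have hS : ∀ k l, (∑ b ∈ S, φ (Pc b k l) * 𝔅 b) = (P : Matrix (Fin n) (Fin n) L) k l := by
    intro k l
    set x : L := (P : Matrix (Fin n) (Fin n) L) k l with hx
    have hsub : (𝔅.repr x).support ⊆ S :=
      fun b hb => Finset.mem_biUnion.mpr ⟨(k, l), Finset.mem_univ _, hb⟩
    have key : ∑ b ∈ (𝔅.repr x).support, (𝔅.repr x) b • 𝔅 b = ∑ b ∈ S, (𝔅.repr x) b • 𝔅 b :=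
      Finset.sum_subset hsub (fun b _ hb => by
        rw [Finsupp.notMem_support_iff.mp hb, zero_smul])
    have h3 : ∑ b ∈ (𝔅.repr x).support, (𝔅.repr x) b • 𝔅 b = x := by
      conv_rhs => rw [← Module.Basis.linearCombination_repr 𝔅 x]
      rw [Finsupp.linearCombination_apply, Finsupp.sum]
    have h4 : ∀ b : ι, φ (Pc b k l) * 𝔅 b = (𝔅.repr x) b • 𝔅 b := by
      intro b
      rw [Algebra.smul_def]
      rfl
    rw [Finset.sum_congr rfl fun b _ => h4 b, ← key, h3]
  -- the determinant polynomial
  set Mp : Matrix (Fin n) (Fin n) (MvPolynomial S K) :=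
    Matrix.of (fun k l => ∑ b ∈ S.attach, MvPolynomial.X b * MvPolynomial.C (Pc b.1 k l))
    with hMp
  have hhom : Mp.det.IsHomogeneous n := by
    apply aux_det_isHomogeneous
    intro k l
    apply MvPolynomial.IsHomogeneous.sum
    intro b _
    simpa [mul_comm] using MvPolynomial.isHomogeneous_C_mul_X (R := K) (Pc b.1 k l) b
  -- evaluation over L gives det P
  have hev : (MvPolynomial.eval₂Hom φ (fun b : S => 𝔅 b.1)) Mp.det
      = (P : Matrix (Fin n) (Fin n) L).det := by
    rw [RingHom.map_det]
    congr 1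
    ext k l
    rw [RingHom.mapMatrix_apply]
    simp only [Matrix.map_apply, hMp, Matrix.of_apply, map_sum, map_mul,
      MvPolynomial.eval₂Hom_X', MvPolynomial.eval₂Hom_C]
    rw [← hS k l, ← Finset.sum_attach S (fun b => φ (Pc b k l) * 𝔅 b)]
    exact Finset.sum_congr rfl fun b _ => mul_comm _ _
  have hne : Mp.det ≠ 0 := by
    intro h0
    rw [h0, map_zero] at hev
    exact hdetP hev.symm
  -- find a K-point where det doesn't vanish
  obtain ⟨a, ha⟩ : ∃ a : S → K, MvPolynomial.eval a Mp.det ≠ 0 := by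
    by_contra hc
    push_neg at hc
    exact hne (hhom.eq_zero_of_forall_eval_eq_zero_of_le_card hc hK)
  set Q0 : Matrix (Fin n) (Fin n) K := ∑ b ∈ S.attach, a b • Pc b.1 with hQ0
  have hQ0det : Q0.det ≠ 0 := by
    have : MvPolynomial.eval a Mp.det = Q0.det := by
      rw [RingHom.map_det]
      congr 1
      ext k l
      rw [RingHom.mapMatrix_apply]
      simp only [Matrix.map_apply, hMp, Matrix.of_apply, map_sum, map_mul,
        MvPolynomial.eval_X, MvPolynomial.eval_C, hQ0, Matrix.sum_apply, Matrix.smul_apply,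
        smul_eq_mul]
    rwa [this] at ha
  have hQ0A : ∀ i, Q0 * A i = B i * Q0 := by
    intro i
    rw [hQ0, Finset.sum_mul, Finset.mul_sum]
    refine Finset.sum_congr rfl fun b _ => ?_
    rw [Matrix.smul_mul, Matrix.mul_smul, hcomp]
  have hU : IsUnit Q0 := (Matrix.isUnit_iff_isUnit_det _).mpr (isUnit_iff_ne_zero.mpr hQ0det)
  refine ⟨hU.unit, fun i => ?_⟩
  have h1 : (hU.unit : Matrix (Fin n) (Fin n) K) = Q0 := hU.unit_spec
  rw [h1, hQ0A, Matrix.mul_nonsing_inv_cancel_right _ _ (isUnit_iff_ne_zero.mpr hQ0det)]
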